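/- Relativized semiselective Galvin lemma (for the Ellentuck space): Let H ⊆ ℕ^[∞] be a semiselective coideal, let F be a family of finite subsets of ℕ, let A ∈ H and let a be a finite subset of A. Then there exists B ∈ H ∩ [a,A] such that either (1) no set b ∈ F satisfies: a ⊆ b, every element of b ∖ a is greater than every element of a, and b ∖ a ⊆ B; or (2) every C ∈ [a,B] has an initial segment in F, i.e. there is n ∈ ℕ with r_n(C) ∈ F. -/
import Mathlib


open Set

/-- `ellR n A` : the set of the `n` least elements of `A ⊆ ℕ` (the approximation `rₙ(A)`). -/
noncomputable def ellR (n : ℕ) (A : Set ℕ) : Finset ℕ :=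
  (Finset.range n).image (Nat.nth (· ∈ A))

/-- `a ⊏ B` : the finite set `a` is an initial segment of `B`. -/
def IsInitSeg (a : Finset ℕ) (B : Set ℕ) : Prop :=
  ↑a ⊆ B ∧ ∀ x ∈ B, x ∉ a → ∀ y ∈ a, y < x

/-- The Ellentuck neighborhood `[a, A] = {B ∈ ℕ^[∞] : a ⊏ B ∧ B ⊆ A}`. -/
def ENbhd (a : Finset ℕ) (A : Set ℕ) : Set (Set ℕ) :=
  {B | B.Infinite ∧ IsInitSeg a B ∧ B ⊆ A}

/-- `[n, A] := [rₙ(A), A]`. -/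
noncomputable def ENbhdN (n : ℕ) (A : Set ℕ) : Set (Set ℕ) :=
  ENbhd (ellR n A) A

/-- `depth_A(a)` : the least `n` with `a ⊆ rₙ(A)`. -/
noncomputable def depth (A : Set ℕ) (a : Finset ℕ) : ℕ :=
  sInf {n | a ⊆ ellR n A}

/-- The one-step extensions of `a` inside `B`: the sets `a ∪ {x}` with `x ∈ B` greater
than every element of `a` (i.e. `r_{|a|+1}[a,B]`). -/
def oneStepExt (a : Finset ℕ) (B : Set ℕ) : Set (Finset ℕ) :=
  {b | ∃ x ∈ B, (∀ y ∈ a, y < x) ∧ b = insert x a}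

/-- `H ⊆ ℕ^[∞]` is a coideal: upward closed, satisfies A3 mod H and A4 mod H. -/
def IsCoideal (H : Set (Set ℕ)) : Prop :=
  (∀ A ∈ H, A.Infinite) ∧
  (∀ A ∈ H, ∀ B : Set ℕ, B.Infinite → A ⊆ B → B ∈ H) ∧
  (∀ A ∈ H, ∀ a : Finset ℕ, ↑a ⊆ A →
    (∀ B ∈ H ∩ ENbhdN (depth A a) A, (ENbhd a B).Nonempty) ∧
    (∀ B ∈ H, B ⊆ A → (ENbhd a B).Nonempty →
      ∃ A' ∈ H ∩ ENbhdN (depth A a) A,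
        (ENbhd a A').Nonempty ∧ ENbhd a A' ⊆ ENbhd a B)) ∧
  (∀ A ∈ H, ∀ a : Finset ℕ, ↑a ⊆ A → ∀ O : Set (Finset ℕ),
    ∃ B ∈ H ∩ ENbhdN (depth A a) A,
      oneStepExt a B ⊆ O ∨ oneStepExt a B ∩ O = ∅)

/-- `D` is dense open in `S` (with respect to `⊆`). -/
def DenseOpenIn (D S : Set (Set ℕ)) : Prop :=
  (∀ A ∈ S, ∃ B ∈ D, B ⊆ A) ∧ (∀ A ∈ S, ∀ B ∈ D, A ⊆ B → A ∈ D)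

/-- `C` diagonalizes the family `{A_a}`: for every finite `a ⊆ C`, `[a,C] ⊆ [a,A_a]`. -/
def Diagonalizes (C : Set ℕ) (Afam : Finset ℕ → Set ℕ) : Prop :=
  ∀ a : Finset ℕ, ↑a ⊆ C → ENbhd a C ⊆ ENbhd a (Afam a)

/-- `H` is a semiselective coideal. -/
def Semiselective (H : Set (Set ℕ)) : Prop :=
  IsCoideal H ∧
  ∀ A ∈ H, ∀ Dfam : Finset ℕ → Set (Set ℕ),
    (∀ a : Finset ℕ, ↑a ⊆ A → DenseOpenIn (Dfam a) (H ∩ ENbhdN (depth A a) A)) →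
    ∀ B ∈ H, B ⊆ A →
      ∃ C ∈ H, C ⊆ B ∧ ∃ Afam : Finset ℕ → Set ℕ,
        (∀ a : Finset ℕ, ↑a ⊆ A → Afam a ∈ Dfam a) ∧ Diagonalizes C Afam

/-- `X` is `H`-Ramsey. -/
def HRamsey (H X : Set (Set ℕ)) : Prop :=
  ∀ a : Finset ℕ, ∀ A ∈ H, (ENbhd a A).Nonempty →
    ∃ B ∈ ENbhd a A ∩ H, ENbhd a B ⊆ X ∨ ENbhd a B ∩ X = ∅

/-- `X` is `H`-Ramsey null. -/
def HRamseyNull (H X : Set (Set ℕ)) : Prop :=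
  ∀ a : Finset ℕ, ∀ A ∈ H, (ENbhd a A).Nonempty →
    ∃ B ∈ ENbhd a A ∩ H, ENbhd a B ∩ X = ∅

/-- `X` is `H`-Baire. -/
def HBaire (H X : Set (Set ℕ)) : Prop :=
  ∀ a : Finset ℕ, ∀ A ∈ H, (ENbhd a A).Nonempty →
    ∃ (b : Finset ℕ) (B : Set ℕ), B ∈ H ∧ (ENbhd b B).Nonempty ∧
      ENbhd b B ⊆ ENbhd a A ∧ (ENbhd b B ⊆ X ∨ ENbhd b B ∩ X = ∅)

/-- `X` is `H`-meager. -/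
def HMeager (H X : Set (Set ℕ)) : Prop :=
  ∀ a : Finset ℕ, ∀ A ∈ H, (ENbhd a A).Nonempty →
    ∃ (b : Finset ℕ) (B : Set ℕ), B ∈ H ∧ (ENbhd b B).Nonempty ∧
      ENbhd b B ⊆ ENbhd a A ∧ ENbhd b B ∩ X = ∅

/-- `Exp(H) = {[n,A] : n ∈ ℕ, A ∈ H}`. -/
def ExpH (H : Set (Set ℕ)) : Set (Set (Set ℕ)) :=
  {S | ∃ (n : ℕ) (A : Set ℕ), A ∈ H ∧ S = ENbhdN n A}

/-- `X` is `Exp(H)`-nowhere dense. -/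
def ExpNwd (H X : Set (Set ℕ)) : Prop :=
  ∀ S ∈ ExpH H, ∃ T ∈ ExpH H, T ⊆ S ∧ T ∩ X = ∅

/-- Combinatorial forcing: `A` accepts `a` (relative to `H` and `F`). -/
def Accepts (H : Set (Set ℕ)) (F : Set (Finset ℕ)) (A : Set ℕ) (a : Finset ℕ) : Prop :=
  ∀ B ∈ H ∩ ENbhdN (depth A a) A, ∃ n : ℕ, ellR n B ∈ F

/-- Combinatorial forcing: `A` rejects `a` (relative to `H` and `F`). -/
def Rejects (H : Set (Set ℕ)) (F : Set (Finset ℕ)) (A : Set ℕ) (a : Finset ℕ) : Prop :=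
  ∀ B ∈ H ∩ ENbhdN (depth A a) A, ¬ Accepts H F B a

/-- `A ≤* B` : `A` is an almost-reduction of `B`. -/
def AlmostRed (A B : Set ℕ) : Prop :=
  ∃ a : Finset ℕ, ↑a ⊆ A ∧ ENbhd a A ⊆ ENbhd a B

/-- `D ⊆ H` is dense open in the preorder `(H, ≤*)`. -/
def DenseOpenStar (H D : Set (Set ℕ)) : Prop :=
  D ⊆ H ∧ (∀ A ∈ H, ∃ B ∈ D, AlmostRed B A) ∧
  (∀ A ∈ H, ∀ B ∈ D, AlmostRed A B → A ∈ D)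

/-- The family `{A_a}` is filtered by `⊆` (indexed by the finite subsets of `A`). -/
def FilteredFamily (A : Set ℕ) (Afam : Finset ℕ → Set ℕ) : Prop :=
  ∀ a b : Finset ℕ, ↑a ⊆ A → ↑b ⊆ A →
    ∃ c : Finset ℕ, ↑c ⊆ A ∧ Afam c ⊆ Afam a ∧ Afam c ⊆ Afam b

/-- `H` is a selective coideal. -/
def SelectiveCoideal (H : Set (Set ℕ)) : Prop :=
  IsCoideal H ∧
  ∀ A ∈ H, ∀ Afam : Finset ℕ → Set ℕ,
    (∀ a : Finset ℕ, ↑a ⊆ A → Afam a ∈ H ∧ Afam a ⊆ A ∧ (ENbhd a (Afam a)).Nonempty) →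
    FilteredFamily A Afam →
    ∃ B ∈ H, B ⊆ A ∧ Diagonalizes B Afam

/-- `U ⊆ ℕ^[∞]` is a filter on `(ℕ^[∞], ⊆)`. -/
def IsEFilter (U : Set (Set ℕ)) : Prop :=
  (∀ A ∈ U, A.Infinite) ∧
  (∀ A ∈ U, ∀ B : Set ℕ, B.Infinite → A ⊆ B → B ∈ U) ∧
  (∀ A ∈ U, ∀ B ∈ U, ∀ a : Finset ℕ,
    (ENbhd a A).Nonempty → (ENbhd a B).Nonempty →
      ∃ C ∈ U, C ∈ ENbhd a A ∩ ENbhd a B)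

/-- `U` is an ultrafilter: a maximal filter satisfying A3 mod U. -/
def IsEUltrafilter (U : Set (Set ℕ)) : Prop :=
  IsEFilter U ∧
  (∀ U' : Set (Set ℕ), IsEFilter U' → U ⊆ U' → U' = U) ∧
  (∀ A ∈ U, ∀ a : Finset ℕ, ↑a ⊆ A →
    (∀ B ∈ U ∩ ENbhdN (depth A a) A, (ENbhd a B).Nonempty) ∧
    (∀ B ∈ U, B ⊆ A → (ENbhd a B).Nonempty →
      ∃ A' ∈ U ∩ ENbhdN (depth A a) A,
        (ENbhd a A').Nonempty ∧ ENbhd a A' ⊆ ENbhd a B))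

/-- `U` is a selective ultrafilter. -/
def SelectiveUltrafilter (U : Set (Set ℕ)) : Prop :=
  IsEUltrafilter U ∧
  ∀ A ∈ U, ∀ Afam : Finset ℕ → Set ℕ,
    (∀ a : Finset ℕ, ↑a ⊆ A → Afam a ∈ U ∧ Afam a ⊆ A ∧ (ENbhd a (Afam a)).Nonempty) →
    FilteredFamily A Afam →
    ∃ B ∈ U, B ⊆ A ∧ Diagonalizes B Afam

/-- The conditions of the Mathias poset `M_U` : pairs `(a, A)` with `A ∈ U`, `[a,A] ≠ ∅`. -/
def MathiasCond (U : Set (Set ℕ)) : Set (Finset ℕ × Set ℕ) :=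
  {p | p.2 ∈ U ∧ (ENbhd p.1 p.2).Nonempty}

/-- `D` is a dense open subset of the Mathias poset `M_U`
(ordered by `(a,A) ≤ (b,B) ↔ [a,A] ⊆ [b,B]`). -/
def MathiasDenseOpen (U : Set (Set ℕ)) (D : Set (Finset ℕ × Set ℕ)) : Prop :=
  D ⊆ MathiasCond U ∧
  (∀ p ∈ MathiasCond U, ∃ q ∈ D, ENbhd q.1 q.2 ⊆ ENbhd p.1 p.2) ∧
  (∀ p ∈ MathiasCond U, ∀ q ∈ D, ENbhd p.1 p.2 ⊆ ENbhd q.1 q.2 → p ∈ D)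

/-- `A` captures `(a, D)`. -/
def Captures (U : Set (Set ℕ)) (D : Set (Finset ℕ × Set ℕ))
    (a : Finset ℕ) (A : Set ℕ) : Prop :=
  A ∈ U ∧ (ENbhd a A).Nonempty ∧
  ∀ B ∈ ENbhd a A, ∃ m : ℕ, m > a.card ∧ (ellR m B, A) ∈ D


namespace SGalvin

/-- `x` lies strictly above every element of `b`. -/
def Ab (b : Finset ℕ) (x : ℕ) : Prop := ∀ y ∈ b, y < x

/-- `Fl b X = b ∪ {x ∈ X : x above b}`, the canonical member of `[b, b ∪ X]`. -/
def Fl (b : Finset ℕ) (X : Set ℕ) : Set ℕ := ↑b ∪ {x ∈ X | Ab b x}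

/-- `E` accepts `b` (strong form): every infinite `C` with `b ⊏ C` and `C ∖ b ⊆ E`
has an initial segment in `F`. -/
def Acc (F : Set (Finset ℕ)) (E : Set ℕ) (b : Finset ℕ) : Prop :=
  ∀ C : Set ℕ, C.Infinite → IsInitSeg b C → C \ ↑b ⊆ E → ∃ n, ellR n C ∈ F

/-- `Y` rejects `b`: no `H`-subset of `Y` accepts `b`. -/
def Rej (H : Set (Set ℕ)) (F : Set (Finset ℕ)) (Y : Set ℕ) (b : Finset ℕ) : Prop :=
  ∀ E ∈ H, E ⊆ Y → ¬ Acc F E b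

lemma acc_mono {F : Set (Finset ℕ)} {E E' : Set ℕ} {b : Finset ℕ}
    (h : E' ⊆ E) (ha : Acc F E b) : Acc F E' b :=
  fun C h1 h2 h3 => ha C h1 h2 (h3.trans h)

lemma rej_mono {H : Set (Set ℕ)} {F : Set (Finset ℕ)} {Y Y' : Set ℕ} {b : Finset ℕ}
    (h : Y' ⊆ Y) (hr : Rej H F Y b) : Rej H F Y' b :=
  fun E hE hEY => hr E hE (hEY.trans h)

lemma above_eq (X : Set ℕ) (b : Finset ℕ) :
    {x ∈ X | Ab b x} = X \ {x | ∃ y ∈ b, x ≤ y} := by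
  ext x
  simp only [Set.mem_sep_iff, Set.mem_diff, Set.mem_setOf_eq, Ab]
  constructor
  · rintro ⟨hx, h⟩
    refine ⟨hx, ?_⟩
    rintro ⟨y, hy, hxy⟩
    exact absurd hxy (not_le.mpr (h y hy))
  · rintro ⟨hx, h⟩
    push_neg at h
    exact ⟨hx, h⟩

lemma bad_finite (b : Finset ℕ) : {x : ℕ | ∃ y ∈ b, x ≤ y}.Finite := by
  refine (Set.finite_Iic (b.sup id)).subset ?_
  rintro x ⟨y, hy, hxy⟩
  exact hxy.trans (Finset.le_sup (f := id) hy)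

lemma above_infinite {X : Set ℕ} (hX : X.Infinite) (b : Finset ℕ) :
    {x ∈ X | Ab b x}.Infinite := by
  rw [above_eq]
  exact hX.diff (bad_finite b)

lemma infinite_setOf {A : Set ℕ} (hA : A.Infinite) : {x | x ∈ A}.Infinite := by
  rwa [Set.setOf_mem_eq]

lemma ellR_subset {A : Set ℕ} (hA : A.Infinite) (n : ℕ) : ↑(ellR n A) ⊆ A := by
  intro x hx
  rw [Finset.mem_coe, ellR, Finset.mem_image] at hx
  obtain ⟨k, _, rfl⟩ := hx
  exact Nat.nth_mem_of_infinite (infinite_setOf hA) k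

lemma ellR_card {A : Set ℕ} (hA : A.Infinite) (n : ℕ) : (ellR n A).card = n := by
  rw [ellR, Finset.card_image_of_injective _ (Nat.nth_injective (infinite_setOf hA)),
    Finset.card_range]

lemma ellR_initSeg {A : Set ℕ} (hA : A.Infinite) (n : ℕ) : IsInitSeg (ellR n A) A := by
  classical
  refine ⟨ellR_subset hA n, ?_⟩
  intro x hxA hxn y hy
  rw [ellR, Finset.mem_image] at hy
  obtain ⟨j, hj, rfl⟩ := hy
  have hx : Nat.nth (· ∈ A) (Nat.count (· ∈ A) x) = x := Nat.nth_count hxA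
  have hcount : n ≤ Nat.count (· ∈ A) x := by
    by_contra h
    push_neg at h
    exact hxn (by rw [ellR, Finset.mem_image]; exact ⟨_, Finset.mem_range.mpr h, hx⟩)
  calc Nat.nth (· ∈ A) j
      < Nat.nth (· ∈ A) (Nat.count (· ∈ A) x) :=
        Nat.nth_strictMono (infinite_setOf hA) (lt_of_lt_of_le (Finset.mem_range.mp hj) hcount)
    _ = x := hx

lemma initSeg_total {b b' : Finset ℕ} {C : Set ℕ}
    (h : IsInitSeg b C) (h' : IsInitSeg b' C) : b ⊆ b' ∨ b' ⊆ b := by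
  by_cases hbb : b ⊆ b'
  · exact Or.inl hbb
  · right
    obtain ⟨x, hxb, hxb'⟩ := Finset.not_subset.mp hbb
    intro y hy
    have hxC : x ∈ C := h.1 hxb
    have hyx : y < x := h'.2 x hxC hxb' y hy
    by_contra hyb
    have hxy : x < y := h.2 y (h'.1 hy) hyb x hxb
    omega

lemma initSeg_ellR {b : Finset ℕ} {C : Set ℕ} (hC : C.Infinite) (h : IsInitSeg b C) :
    ellR b.card C = b := by
  have h1 := ellR_initSeg hC b.card
  rcases initSeg_total h1 h with hs | hs
  · exact Finset.eq_of_subset_of_card_le hs (ellR_card hC b.card).ge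
  · exact (Finset.eq_of_subset_of_card_le hs (ellR_card hC b.card).le).symm

lemma depth_initSeg {b : Finset ℕ} {C : Set ℕ} (hC : C.Infinite) (h : IsInitSeg b C) :
    ellR (depth C b) C = b := by
  have hmem : b.card ∈ {n | b ⊆ ellR n C} := by
    rw [Set.mem_setOf_eq, initSeg_ellR hC h]
  have h1 : b ⊆ ellR (depth C b) C := Nat.sInf_mem ⟨_, hmem⟩
  have h2 : depth C b ≤ b.card := Nat.sInf_le hmem
  have h3 : b.card ≤ depth C b := by
    have := Finset.card_le_card h1
    rwa [ellR_card hC] at this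
  rw [show depth C b = b.card from le_antisymm h2 h3, initSeg_ellR hC h]

lemma mem_F_acc {F : Set (Finset ℕ)} {E : Set ℕ} {b : Finset ℕ} (hb : b ∈ F) : Acc F E b :=
  fun C hC hI _ => ⟨b.card, by rw [initSeg_ellR hC hI]; exact hb⟩

lemma exists_min_ext {b : Finset ℕ} {C : Set ℕ} (hC : C.Infinite) (hI : IsInitSeg b C) :
    ∃ x ∈ C \ ↑b, Ab b x ∧ IsInitSeg (insert x b) C ∧ C \ ↑(insert x b) ⊆ C \ ↑b := by
  have hne : (C \ ↑b).Nonempty := (hC.diff b.finite_toSet).nonempty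
  set x := sInf (C \ ↑b) with hxdef
  have hxmem : x ∈ C \ ↑b := Nat.sInf_mem hne
  have hxb : x ∉ b := fun h => hxmem.2 (Finset.mem_coe.mpr h)
  have hab : Ab b x := fun y hy => hI.2 x hxmem.1 hxb y hy
  refine ⟨x, hxmem, hab, ⟨?_, ?_⟩, ?_⟩
  · intro z hz
    rw [Finset.coe_insert, Set.mem_insert_iff] at hz
    rcases hz with rfl | hz
    · exact hxmem.1
    · exact hI.1 hz
  · intro z hzC hzn y hy
    have hzb : z ∉ b := fun h => hzn (Finset.mem_insert_of_mem h)
    have hzx : z ≠ x := fun h => hzn (h ▸ Finset.mem_insert_self x b)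
    have hzge : x ≤ z := Nat.sInf_le ⟨hzC, fun h => hzb (Finset.mem_coe.mp h)⟩
    rcases Finset.mem_insert.mp hy with rfl | hy
    · omega
    · exact hI.2 z hzC hzb y hy
  · intro z hz
    refine ⟨hz.1, fun h => hz.2 ?_⟩
    rw [Finset.mem_coe] at h
    exact Finset.mem_coe.mpr (Finset.mem_insert_of_mem h)

section Coideal

variable {H : Set (Set ℕ)} (hCo : IsCoideal H)

include hCo

lemma del_one {D : Set ℕ} (hD : D ∈ H) (m : ℕ) : D \ {m} ∈ H := by
  classical
  by_cases hm : m ∈ D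
  swap
  · rwa [Set.diff_singleton_eq_self hm]
  have hDinf : D.Infinite := hCo.1 D hD
  have hfin : ({x ∈ D | x < m} : Set ℕ).Finite :=
    (Set.finite_Iio m).subset (fun x hx => hx.2)
  set a : Finset ℕ := hfin.toFinset with hadef
  have hmema : ∀ x, x ∈ a ↔ x ∈ D ∧ x < m := fun x => Set.Finite.mem_toFinset hfin
  have haD : ↑a ⊆ D := fun x hx => ((hmema x).mp (Finset.mem_coe.mp hx)).1
  have hainit : IsInitSeg a D := by
    refine ⟨haD, ?_⟩
    intro x hxD hxa y hy
    have h1 : ¬ x < m := fun h => hxa ((hmema x).mpr ⟨hxD, h⟩)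
    have h2 : y < m := ((hmema y).mp hy).2
    omega
  have hma : m ∉ a := by
    rw [hmema]
    rintro ⟨-, h⟩
    omega
  obtain ⟨B, hBmem, hcase⟩ := hCo.2.2.2 D hD a haD {d | m ∉ d}
  obtain ⟨hBH, hBN⟩ := hBmem
  rw [ENbhdN, depth_initSeg hDinf hainit] at hBN
  obtain ⟨hBinf, hBinit, hBD⟩ := hBN
  rcases hcase with hsub | hdisj
  · have hmB : m ∉ B := by
      intro hmB
      have h1 : insert m a ∈ oneStepExt a B := ⟨m, hmB, hBinit.2 m hmB hma, rfl⟩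
      exact (hsub h1) (Finset.mem_insert_self m a)
    refine hCo.2.1 B hBH (D \ {m}) (hDinf.diff (Set.finite_singleton m)) ?_
    intro x hx
    exact ⟨hBD hx, by simp only [Set.mem_singleton_iff]; rintro rfl; exact hmB hx⟩
  · exfalso
    obtain ⟨x, hxB, hxn⟩ := (hBinf.diff ((a.finite_toSet).union (Set.finite_singleton m))).nonempty
    have hxa : x ∉ a := fun h => hxn (Or.inl (Finset.mem_coe.mpr h))
    have hxm : x ≠ m := fun h => hxn (Or.inr (by simp [h]))
    have h1 : insert x a ∈ oneStepExt a B ∩ {d | m ∉ d} := by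
      refine ⟨⟨x, hxB, hBinit.2 x hxB hxa, rfl⟩, ?_⟩
      simp only [Set.mem_setOf_eq, Finset.mem_insert]
      push_neg
      exact ⟨fun h => hxm h.symm, hma⟩
    rw [hdisj] at h1
    exact h1

lemma del_finset {D : Set ℕ} (hD : D ∈ H) (s : Finset ℕ) : D \ ↑s ∈ H := by
  classical
  induction s using Finset.induction_on with
  | empty => simpa using hD
  | @insert x s hx ih =>
    have heq : D \ ↑(insert x s) = (D \ ↑s) \ {x} := by
      ext y
      simp only [Finset.coe_insert, Set.mem_diff, Set.mem_insert_iff, Finset.mem_coe,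
        Set.mem_singleton_iff]
      tauto
    rw [heq]
    exact del_one hCo ih x

lemma above_mem {D : Set ℕ} (hD : D ∈ H) (b : Finset ℕ) : {x ∈ D | Ab b x} ∈ H := by
  rw [above_eq]
  have hfin := bad_finite b
  rw [show {x : ℕ | ∃ y ∈ b, x ≤ y} = ↑hfin.toFinset from (Set.Finite.coe_toFinset hfin).symm]
  exact del_finset hCo hD _

end Coideal

lemma fl_initSeg (b : Finset ℕ) (X : Set ℕ) : IsInitSeg b (Fl b X) := by
  refine ⟨Set.subset_union_left, ?_⟩
  intro x hx hxb y hy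
  rcases hx with h | h
  · exact absurd (Finset.mem_coe.mp h) hxb
  · exact h.2 y hy

lemma fl_infinite {X : Set ℕ} (hX : X.Infinite) (b : Finset ℕ) : (Fl b X).Infinite :=
  (above_infinite hX b).mono Set.subset_union_right

lemma fl_subset {b : Finset ℕ} {X A : Set ℕ} (hb : ↑b ⊆ A) (hX : X ⊆ A) : Fl b X ⊆ A := by
  intro x hx
  rcases hx with h | h
  · exact hb h
  · exact hX h.1

lemma fl_mem_H {H : Set (Set ℕ)} (hCo : IsCoideal H) {X : Set ℕ} (hX : X ∈ H)
    (b : Finset ℕ) : Fl b X ∈ H :=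
  hCo.2.1 _ (above_mem hCo hX b) _ (fl_infinite (hCo.1 X hX) b) Set.subset_union_right

lemma diag_above {C : Set ℕ} {Afam : Finset ℕ → Set ℕ} (hdiag : Diagonalizes C Afam)
    (hC : C.Infinite) {c : Finset ℕ} (hc : ↑c ⊆ C) : {x ∈ C | Ab c x} ⊆ Afam c := by
  have hmem : Fl c C ∈ ENbhd c C :=
    ⟨fl_infinite hC c, fl_initSeg c C, fl_subset hc Set.Subset.rfl⟩
  have h := hdiag c hc hmem
  exact fun x hx => h.2.2 (Or.inr hx)

/-- The dense-open families used for the first diagonalization (deciding every `a ∪ c`). -/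
def Dfam1 (H : Set (Set ℕ)) (F : Set (Finset ℕ)) (A : Set ℕ) (a c : Finset ℕ) :
    Set (Set ℕ) :=
  {E | E ∈ H ∧ E ⊆ A ∧ (Acc F E (a ∪ c) ∨ Rej H F E (a ∪ c))}

/-- The dense-open families used for the second diagonalization (propagating rejection). -/
def Dfam2 (H : Set (Set ℕ)) (F : Set (Finset ℕ)) (B₀ C₀ : Set ℕ) (a c : Finset ℕ) :
    Set (Set ℕ) :=
  {E | E ∈ H ∧ E ⊆ B₀ ∧
    ((↑c ⊆ C₀ ∧ (∀ y ∈ c, ∀ z ∈ a, z < y) ∧ Rej H F B₀ (a ∪ c)) →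
      ∀ x ∈ E, (∀ y ∈ a ∪ c, y < x) → Rej H F B₀ (insert x (a ∪ c)))}

lemma mem_Dfam1 {H : Set (Set ℕ)} {F : Set (Finset ℕ)} {A : Set ℕ} {a c : Finset ℕ}
    {E : Set ℕ} :
    E ∈ Dfam1 H F A a c ↔ E ∈ H ∧ E ⊆ A ∧ (Acc F E (a ∪ c) ∨ Rej H F E (a ∪ c)) :=
  Iff.rfl

lemma mem_Dfam2 {H : Set (Set ℕ)} {F : Set (Finset ℕ)} {B₀ C₀ : Set ℕ} {a c : Finset ℕ}
    {E : Set ℕ} :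
    E ∈ Dfam2 H F B₀ C₀ a c ↔ E ∈ H ∧ E ⊆ B₀ ∧
      ((↑c ⊆ C₀ ∧ (∀ y ∈ c, ∀ z ∈ a, z < y) ∧ Rej H F B₀ (a ∪ c)) →
        ∀ x ∈ E, (∀ y ∈ a ∪ c, y < x) → Rej H F B₀ (insert x (a ∪ c))) :=
  Iff.rfl

end SGalvin

/-- Relativized semiselective Galvin lemma for the Ellentuck space. -/
theorem semiselective_galvin_rel (H : Set (Set ℕ)) (hH : Semiselective H)
    (F : Set (Finset ℕ)) (A : Set ℕ) (hA : A ∈ H) (a : Finset ℕ) (ha : ↑a ⊆ A) :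
    ∃ B ∈ H ∩ ENbhd a A,
      ((∀ b ∈ F, ¬(a ⊆ b ∧ (∀ x ∈ b \ a, ∀ y ∈ a, y < x) ∧ ↑(b \ a) ⊆ B)) ∨
        (∀ C ∈ ENbhd a B, ∃ n : ℕ, ellR n C ∈ F)) := by
  classical
  obtain ⟨hCo, hsel⟩ := hH
  have hup := hCo.2.1
  have hinf := hCo.1
  -- First application of semiselectivity: a set deciding every `a ∪ c`.
  have hD1 : ∀ c : Finset ℕ, ↑c ⊆ A →
      DenseOpenIn (SGalvin.Dfam1 H F A a c) (H ∩ ENbhdN (depth A c) A) := by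
    intro c _
    constructor
    · rintro E ⟨hEH, -, -, hEA⟩
      by_cases hex : ∃ D ∈ H, D ⊆ E ∧ SGalvin.Acc F D (a ∪ c)
      · obtain ⟨D, hDH, hDE, hDacc⟩ := hex
        exact ⟨D, SGalvin.mem_Dfam1.mpr ⟨hDH, hDE.trans hEA, Or.inl hDacc⟩, hDE⟩
      · refine ⟨E, SGalvin.mem_Dfam1.mpr ⟨hEH, hEA, Or.inr ?_⟩, subset_rfl⟩
        intro D hDH hDE hDacc
        exact hex ⟨D, hDH, hDE, hDacc⟩
    · rintro E ⟨hEH, -, -, hEA⟩ D hD hED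
      obtain ⟨hDH, hDA, hdec⟩ := SGalvin.mem_Dfam1.mp hD
      refine SGalvin.mem_Dfam1.mpr ⟨hEH, hEA, ?_⟩
      rcases hdec with h | h
      · exact Or.inl (SGalvin.acc_mono hED h)
      · exact Or.inr (SGalvin.rej_mono hED h)
  obtain ⟨C₀, hC₀H, hC₀A, Afam, hAfam, hdiag⟩ :=
    hsel A hA (SGalvin.Dfam1 H F A a) hD1 A hA subset_rfl
  set B₀ : Set ℕ := ↑a ∪ C₀ with hB₀def
  have hC₀inf : C₀.Infinite := hinf C₀ hC₀H
  have hB₀inf : B₀.Infinite := hC₀inf.mono Set.subset_union_right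
  have hB₀H : B₀ ∈ H := hup C₀ hC₀H B₀ hB₀inf Set.subset_union_right
  have hB₀A : B₀ ⊆ A := Set.union_subset ha hC₀A
  have hB₀mem : ∀ x ∈ B₀, (∀ y ∈ a, y < x) → x ∈ C₀ := by
    intro x hx hxa
    rcases hx with hx | hx
    · exact absurd (hxa x (Finset.mem_coe.mp hx)) (lt_irrefl x)
    · exact hx
  -- `B₀` decides every `a ∪ c` with `c ⊆ C₀` lying above `a`.
  have star : ∀ c : Finset ℕ, ↑c ⊆ C₀ → (∀ y ∈ c, ∀ z ∈ a, z < y) →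
      SGalvin.Acc F B₀ (a ∪ c) ∨ SGalvin.Rej H F B₀ (a ∪ c) := by
    intro c hcC₀ hcA
    obtain ⟨hAfH, hAfA, hdec⟩ := SGalvin.mem_Dfam1.mp (hAfam c (hcC₀.trans hC₀A))
    have hsubA : {x ∈ C₀ | SGalvin.Ab c x} ⊆ Afam c :=
      SGalvin.diag_above hdiag hC₀inf hcC₀
    have key : ∀ z ∈ B₀, (∀ y ∈ a ∪ c, y < z) → z ∈ Afam c := by
      intro z hz hzab
      have hza : ∀ y ∈ a, y < z := fun y hy => hzab y (Finset.mem_union_left c hy)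
      have hzc : ∀ y ∈ c, y < z := fun y hy => hzab y (Finset.mem_union_right a hy)
      exact hsubA ⟨hB₀mem z hz hza, hzc⟩
    rcases hdec with hacc | hrej
    · left
      intro C hCinf hCinit hCsub
      refine hacc C hCinf hCinit ?_
      intro z hz
      exact key z (hCsub hz) (hCinit.2 z hz.1 (fun h => hz.2 (Finset.mem_coe.mpr h)))
    · right
      intro E hEH hEB₀ hEacc
      have hE'H : {x ∈ E | SGalvin.Ab (a ∪ c) x} ∈ H := SGalvin.above_mem hCo hEH (a ∪ c)
      have hE'A : {x ∈ E | SGalvin.Ab (a ∪ c) x} ⊆ Afam c := fun x hx =>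
        key x (hEB₀ hx.1) hx.2
      exact hrej _ hE'H hE'A (SGalvin.acc_mono (fun x hx => hx.1) hEacc)
  have hstar0 := star ∅ (by simp) (by simp)
  rw [Finset.union_empty] at hstar0
  rcases hstar0 with hacc | hrej
  · -- Acceptance case: alternative (2).
    refine ⟨SGalvin.Fl a B₀, Set.mem_inter (SGalvin.fl_mem_H hCo hB₀H a)
      ⟨SGalvin.fl_infinite hB₀inf a, SGalvin.fl_initSeg a B₀,
        SGalvin.fl_subset ha hB₀A⟩, Or.inr ?_⟩
    rintro C ⟨hCinf, hCinit, hCsub⟩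
    refine hacc C hCinf hCinit ?_
    intro z hz
    rcases hCsub hz.1 with h | h
    · exact absurd h hz.2
    · exact h.1
  · -- Rejection case: second diagonalization.
    have hD2 : ∀ c : Finset ℕ, ↑c ⊆ B₀ →
        DenseOpenIn (SGalvin.Dfam2 H F B₀ C₀ a c) (H ∩ ENbhdN (depth B₀ c) B₀) := by
      intro c _
      constructor
      · rintro E ⟨hEH, -, -, hEB₀⟩
        by_cases hg : ↑c ⊆ C₀ ∧ (∀ y ∈ c, ∀ z ∈ a, z < y) ∧ SGalvin.Rej H F B₀ (a ∪ c)
        swap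
        · exact ⟨E, SGalvin.mem_Dfam2.mpr ⟨hEH, hEB₀, fun h => absurd h hg⟩, subset_rfl⟩
        obtain ⟨hcC₀, hcA, hrejc⟩ := hg
        have hEinf : E.Infinite := hinf E hEH
        have hA₂inf : (↑(a ∪ c) ∪ E : Set ℕ).Infinite := hEinf.mono Set.subset_union_right
        have hA₂H : (↑(a ∪ c) ∪ E : Set ℕ) ∈ H := hup E hEH _ hA₂inf Set.subset_union_right
        obtain ⟨B', hB'mem, hcase⟩ :=
          hCo.2.2.2 (↑(a ∪ c) ∪ E) hA₂H (a ∪ c) Set.subset_union_left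
            {d | SGalvin.Acc F B₀ d}
        obtain ⟨hB'H, hB'inf, -, hB'A₂⟩ := hB'mem
        have hE''H : {y ∈ B' | SGalvin.Ab (a ∪ c) y} ∈ H := SGalvin.above_mem hCo hB'H _
        have hE''E : {y ∈ B' | SGalvin.Ab (a ∪ c) y} ⊆ E := by
          rintro y ⟨hyB', hyab⟩
          rcases hB'A₂ hyB' with h | h
          · exact absurd (hyab y (Finset.mem_coe.mp h)) (lt_irrefl y)
          · exact h
        have hE''B₀ : {y ∈ B' | SGalvin.Ab (a ∪ c) y} ⊆ B₀ := hE''E.trans hEB₀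
        rcases hcase with hsub | hdisj
        · exfalso
          refine hrejc _ hE''H hE''B₀ ?_
          intro C hCinf hCinit hCsub
          obtain ⟨x, hxmem, hxab, hxinit, hxsub⟩ := SGalvin.exists_min_ext hCinf hCinit
          have hxE'' : x ∈ {y ∈ B' | SGalvin.Ab (a ∪ c) y} := hCsub hxmem
          have hO : SGalvin.Acc F B₀ (insert x (a ∪ c)) := hsub ⟨x, hxE''.1, hxab, rfl⟩
          exact hO C hCinf hxinit (hxsub.trans (hCsub.trans hE''B₀))
        · refine ⟨_, SGalvin.mem_Dfam2.mpr ⟨hE''H, hE''B₀, ?_⟩, hE''E⟩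
          intro _ x hxE'' hxab
          have hxB' : x ∈ B' := hxE''.1
          have hnO : ¬ SGalvin.Acc F B₀ (insert x (a ∪ c)) := by
            intro hO
            have h1 : insert x (a ∪ c) ∈ oneStepExt (a ∪ c) B' ∩ {d | SGalvin.Acc F B₀ d} :=
              ⟨⟨x, hxB', hxab, rfl⟩, hO⟩
            rw [hdisj] at h1
            exact h1
          have hxC₀ : x ∈ C₀ := hB₀mem x (hE''B₀ hxE'')
            (fun y hy => hxab y (Finset.mem_union_left c hy))
          have hstep := star (insert x c) ?_ ?_
          rotate_left
          · rw [Finset.coe_insert]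
            exact Set.insert_subset hxC₀ hcC₀
          · intro y hy z hz
            rcases Finset.mem_insert.mp hy with rfl | hy
            · exact hxab z (Finset.mem_union_left c hz)
            · exact hcA y hy z hz
          rw [Finset.union_insert] at hstep
          rcases hstep with h | h
          · exact absurd h hnO
          · exact h
      · rintro E ⟨hEH, -, -, hEB₀⟩ D hD hED
        obtain ⟨hDH, hDB₀, himp⟩ := SGalvin.mem_Dfam2.mp hD
        exact SGalvin.mem_Dfam2.mpr ⟨hEH, hEB₀, fun hg x hx hab => himp hg x (hED hx) hab⟩
    obtain ⟨C₁, hC₁H, hC₁B₀, Afam2, hAfam2, hdiag2⟩ :=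
      hsel B₀ hB₀H (SGalvin.Dfam2 H F B₀ C₀ a) hD2 B₀ hB₀H subset_rfl
    have hC₁inf : C₁.Infinite := hinf C₁ hC₁H
    -- main rejection induction
    have rejmain : ∀ n : ℕ, ∀ c : Finset ℕ, c.card = n → ↑c ⊆ C₁ →
        (∀ y ∈ c, ∀ z ∈ a, z < y) → SGalvin.Rej H F B₀ (a ∪ c) := by
      intro n
      induction n with
      | zero =>
        intro c hc _ _
        rw [Finset.card_eq_zero.mp hc, Finset.union_empty]
        exact hrej
      | succ n ih =>
        intro c hc hcC₁ hcA
        have hne : c.Nonempty := Finset.card_pos.mp (by omega)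
        have hxc : c.max' hne ∈ c := c.max'_mem hne
        set x := c.max' hne with hxdef
        have hc'sub : c.erase x ⊆ c := Finset.erase_subset x c
        have hc'card : (c.erase x).card = n := by
          rw [Finset.card_erase_of_mem hxc, hc]
          omega
        have hc'C₁ : ↑(c.erase x) ⊆ C₁ := (Finset.coe_subset.mpr hc'sub).trans hcC₁
        have hc'A : ∀ y ∈ c.erase x, ∀ z ∈ a, z < y := fun y hy => hcA y (hc'sub hy)
        have hrejc' := ih (c.erase x) hc'card hc'C₁ hc'A
        have hxab : ∀ y ∈ c.erase x, y < x := by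
          intro y hy
          have h1 := c.le_max' y (hc'sub hy)
          have h2 : y ≠ x := Finset.ne_of_mem_erase hy
          omega
        have hxAf : x ∈ Afam2 (c.erase x) :=
          SGalvin.diag_above hdiag2 hC₁inf hc'C₁ ⟨hcC₁ (Finset.mem_coe.mpr hxc), hxab⟩
        obtain ⟨-, -, himp⟩ := SGalvin.mem_Dfam2.mp (hAfam2 (c.erase x) (hc'C₁.trans hC₁B₀))
        have hxa : ∀ z ∈ a, z < x := hcA x hxc
        have hg : ↑(c.erase x) ⊆ C₀ ∧ (∀ y ∈ c.erase x, ∀ z ∈ a, z < y) ∧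
            SGalvin.Rej H F B₀ (a ∪ c.erase x) := by
          refine ⟨?_, hc'A, hrejc'⟩
          intro y hy
          exact hB₀mem y (hC₁B₀ (hc'C₁ hy)) (fun z hz =>
            hc'A y (Finset.mem_coe.mp hy) z hz)
        have hres := himp hg x hxAf ?_
        rotate_left
        · intro y hy
          rcases Finset.mem_union.mp hy with h | h
          · exact hxa y h
          · exact hxab y h
        have heq : insert x (a ∪ c.erase x) = a ∪ c := by
          rw [← Finset.union_insert, Finset.insert_erase hxc]
        rwa [heq] at hres
    refine ⟨SGalvin.Fl a C₁, Set.mem_inter (SGalvin.fl_mem_H hCo hC₁H a)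
      ⟨SGalvin.fl_infinite hC₁inf a, SGalvin.fl_initSeg a C₁,
        SGalvin.fl_subset ha (hC₁B₀.trans hB₀A)⟩, Or.inl ?_⟩
    rintro b hbF ⟨hab, hbabove, hbsub⟩
    have hcC₁ : ↑(b \ a) ⊆ C₁ := by
      intro z hz
      rcases hbsub hz with h | h
      · exact absurd h ((Finset.mem_sdiff.mp (Finset.mem_coe.mp hz)).2 ∘ Finset.mem_coe.mp)
      · exact h.1
    have hrb := rejmain (b \ a).card (b \ a) rfl hcC₁ hbabove
    rw [Finset.union_sdiff_of_subset hab] at hrb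
    exact hrb B₀ hB₀H subset_rfl (SGalvin.mem_F_acc hbF)
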